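/- Let C be a finite-dimensional Z₂-graded complex over ℝ with inner product and let Z = ker d, B = im d, HC = Z/B with induced inner products (HC via the isometric identification with Z ∩ B^⊥). Then: (a) the isomorphism det Z ≅ det B ⊗ det HC induced by 0 → B → Z → HC → 0 maps ||·||_{det Z} to ||·||_{det B} ⊗ ||·||_{det HC}; (b) the isomorphism det C ≅ det Z ⊗ det B^op induced by 0 → Z → C → B^op → 0 maps ||·||_{det C} to T_C · ||·||_{det Z} ⊗ ||·||_{det B^op}. -/

import Mathlib

/-!
STATEMENT 14: Let `C` be a finite-dimensional Z₂-graded complex over ℝ with inner product,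
`Z = ker d`, `B = im d`, `HC ≅ Z ∩ B^⊥` (harmonic representatives).  Then:
(a) the isomorphism `det Z ≅ det B ⊗ det HC` induced by `0 → B → Z → HC → 0` is
    norm-preserving (the sequence splits orthogonally): the wedge of an orthonormal basis of
    `B` followed by an orthonormal basis of `H = Z ∩ B^⊥` is a unit-norm generator of
    `det Z` (in each parity);
(b) the isomorphism `det C ≅ det Z ⊗ det B^op` induced by `0 → Z → C →d→ B^op → 0` maps
    `||·||_{det C}` to `T_C ||·||_{det Z} ⊗ ||·||_{det B^op}`: for an orthonormal basis `ζ`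
    of `Z` and lifts `u` with `d ∘ u` an orthonormal basis of `B` (opposite parity), the
    generator `ζ ∧ u` of the top exterior power satisfies `Vol(d̄) · ‖ζ ∧ u‖ = 1` in each
    parity; the two parities combine to the graded factor
    `T_C = Vol(d̄ : C^even → C^odd)/Vol(d̄ : C^odd → C^even)`.
The norm of a top-degree wedge `v₁ ∧ ⋯ ∧ vₙ` is `|det_b v|` for an orthonormal basis `b`.
-/

open Module
open scoped Classical

variable {V : Type*} [NormedAddCommGroup V] [InnerProductSpace ℝ V] [FiniteDimensional ℝ V]
variable {W : Type*} [NormedAddCommGroup W] [InnerProductSpace ℝ W] [FiniteDimensional ℝ W]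

noncomputable def detPrime (T : V →ₗ[ℝ] V) : ℝ :=
  if h : ∀ x ∈ (LinearMap.ker T)ᗮ, T x ∈ (LinearMap.ker T)ᗮ
  then LinearMap.det (T.restrict h) else 1

/-- `Vol(ᾱ) = √(det'(α^♯ α))`. -/
noncomputable def volBar (α : V →ₗ[ℝ] W) : ℝ :=
  Real.sqrt (detPrime ((LinearMap.adjoint α).comp α))

/-- The norm of the top-degree wedge of the family `v`. -/
noncomputable def wedgeNorm (v : Fin (finrank ℝ V) → V) : ℝ :=
  |(stdOrthonormalBasis ℝ V).toBasis.det v|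

open scoped Matrix

local notation "⟪" x ", " y "⟫" => @inner ℝ _ _ x y

/-- The Gram matrix of a finite family of vectors. -/
noncomputable def gramMat {k : ℕ} (v : Fin k → V) : Matrix (Fin k) (Fin k) ℝ :=
  Matrix.of fun i j => ⟪v i, v j⟫

lemma gramMat_eq_transpose_mul {k : ℕ} (v : Fin k → V) :
    gramMat v = ((stdOrthonormalBasis ℝ V).toBasis.toMatrix v)ᵀ *
      ((stdOrthonormalBasis ℝ V).toBasis.toMatrix v) := by
  set b := stdOrthonormalBasis ℝ V
  ext i j
  have hA : ∀ (p : Fin (finrank ℝ V)) (q : Fin k),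
      b.toBasis.toMatrix v p q = ⟪b p, v q⟫ := by
    intro p q
    rw [Basis.toMatrix_apply, OrthonormalBasis.coe_toBasis_repr_apply,
      OrthonormalBasis.repr_apply_apply]
  simp only [gramMat, Matrix.of_apply, Matrix.mul_apply, Matrix.transpose_apply, hA]
  rw [← b.sum_inner_mul_inner (v i) (v j)]
  congr 1; ext p
  rw [real_inner_comm (v i) (b p)]

lemma wedgeNorm_eq_sqrt (v : Fin (finrank ℝ V) → V) :
    wedgeNorm v = Real.sqrt (gramMat v).det := by
  rw [gramMat_eq_transpose_mul, Matrix.det_mul, Matrix.det_transpose, ← sq,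
    Real.sqrt_sq_eq_abs, wedgeNorm, Basis.det_apply]

lemma gramMat_posDef {k : ℕ} {v : Fin k → V} (hv : LinearIndependent ℝ v) :
    (gramMat v).PosDef := by
  refine Matrix.PosDef.of_dotProduct_mulVec_pos ?_ ?_
  · ext i j
    simp [gramMat, Matrix.conjTranspose_apply, real_inner_comm]
  · intro x hx
    have hy : (∑ i, x i • v i) ≠ 0 := by
      intro h0
      exact hx (funext fun i => Fintype.linearIndependent_iff.mp hv x h0 i)
    have key : dotProduct (star x) ((gramMat v) *ᵥ x) =
        ⟪∑ i, x i • v i, ∑ j, x j • v j⟫ := by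
      simp only [dotProduct, Pi.star_apply, star_trivial, Matrix.mulVec, gramMat,
        Matrix.of_apply, sum_inner, inner_sum, real_inner_smul_left, real_inner_smul_right]
      exact Finset.sum_congr rfl fun i _ => by
        rw [Finset.mul_sum]
        exact Finset.sum_congr rfl fun j _ => by rw [real_inner_comm (v j) (v i)]; ring
    rw [key]
    exact lt_of_le_of_ne real_inner_self_nonneg (Ne.symm (inner_self_ne_zero.mpr hy))

lemma det_gramMat_append {n m : ℕ} (a : Fin n → V) (b : Fin m → V) (ha : Orthonormal ℝ a) :
    (gramMat (Fin.append a b)).det =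
      (gramMat b - (Matrix.of fun i j => ⟪a i, b j⟫)ᵀ *
        (Matrix.of fun i j => ⟪a i, b j⟫)).det := by
  have h1 : (gramMat (Fin.append a b)).submatrix finSumFinEquiv finSumFinEquiv =
      Matrix.fromBlocks 1 (Matrix.of fun i j => ⟪a i, b j⟫)
        (Matrix.of fun i j => ⟪a i, b j⟫)ᵀ (gramMat b) := by
    ext i j
    rcases i with i | i <;> rcases j with j | j <;>
      simp only [gramMat, Matrix.submatrix_apply, Matrix.fromBlocks_apply₁₁,
        Matrix.fromBlocks_apply₁₂, Matrix.fromBlocks_apply₂₁, Matrix.fromBlocks_apply₂₂,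
        Matrix.of_apply, Matrix.transpose_apply, finSumFinEquiv_apply_left,
        finSumFinEquiv_apply_right, Fin.append_left, Fin.append_right]
    · rw [orthonormal_iff_ite.mp ha i j, Matrix.one_apply]
    · rw [real_inner_comm]
  rw [← Matrix.det_submatrix_equiv_self finSumFinEquiv (gramMat (Fin.append a b)), h1,
    Matrix.det_fromBlocks_one₁₁]

lemma gramMat_cast {N : ℕ} (hN : N = finrank ℝ V) (v : Fin N → V) :
    gramMat (fun j => v (Fin.cast hN.symm j)) =
      (gramMat v).submatrix (finCongr hN.symm) (finCongr hN.symm) := rfl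

lemma wedgeNorm_append_orthonormal {n m : ℕ} (a : Fin n → V) (b : Fin m → V)
    (ha : Orthonormal ℝ a) (hb : Orthonormal ℝ b) (hab : ∀ i j, ⟪a i, b j⟫ = 0)
    (h : n + m = finrank ℝ V) :
    wedgeNorm (fun j => Fin.append a b (Fin.cast h.symm j)) = 1 := by
  rw [wedgeNorm_eq_sqrt, gramMat_cast h, Matrix.det_submatrix_equiv_self,
    det_gramMat_append a b ha]
  have hX : (Matrix.of fun i j => ⟪a i, b j⟫ : Matrix (Fin n) (Fin m) ℝ) = 0 := by
    ext i j; exact hab i j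
  have hG : gramMat b = 1 := by
    ext i j; rw [gramMat, Matrix.of_apply, orthonormal_iff_ite.mp hb i j, Matrix.one_apply]
  rw [hX, hG]
  simp

lemma volBar_mul_wedgeNorm (d : V →ₗ[ℝ] W) {n m : ℕ}
    (ζ : Fin n → V) (βo : Fin m → W) (u : Fin m → V)
    (hζ : Orthonormal ℝ ζ) (hζs : Submodule.span ℝ (Set.range ζ) = LinearMap.ker d)
    (hβ : Orthonormal ℝ βo) (hu : ∀ j, d (u j) = βo j)
    (h : n + m = finrank ℝ V) :
    volBar d * wedgeNorm (fun j => Fin.append ζ u (Fin.cast h.symm j)) = 1 := by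
  classical
  set T := (LinearMap.adjoint d).comp d with hT
  have hker : LinearMap.ker T = LinearMap.ker d := by
    ext x
    simp only [LinearMap.mem_ker, hT, LinearMap.comp_apply]
    constructor
    · intro hx
      have h1 : (⟪x, (LinearMap.adjoint d) (d x)⟫) = ⟪d x, d x⟫ :=
        LinearMap.adjoint_inner_right d x (d x)
      rw [hx, inner_zero_right] at h1
      exact inner_self_eq_zero.mp h1.symm
    · intro hx; rw [hx, map_zero]
  have hζK : ∀ k, ζ k ∈ LinearMap.ker d := fun k => by
    rw [← hζs]; exact Submodule.subset_span ⟨k, rfl⟩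
  set w : Fin m → V := fun j => u j - ∑ k, (⟪ζ k, u j⟫) • ζ k with hw
  have hwdef : ∀ j, w j = u j - ∑ k, (⟪ζ k, u j⟫) • ζ k := fun j => by rw [hw]
  have hdw : ∀ j, d (w j) = βo j := by
    intro j
    have hdζ : ∀ k, d (ζ k) = 0 := fun k => hζK k
    rw [hwdef j, map_sub, map_sum]
    simp [hdζ, hu]
  have hζw : ∀ i j, ⟪ζ i, w j⟫ = 0 := by
    intro i j
    rw [hwdef j, inner_sub_right, inner_sum]
    have hoζ : ∀ k, (⟪ζ i, ζ k⟫) = if i = k then (1:ℝ) else 0 :=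
      fun k => orthonormal_iff_ite.mp hζ i k
    simp [real_inner_smul_right, hoζ]
  have hwK : ∀ j, w j ∈ (LinearMap.ker T)ᗮ := by
    intro j
    rw [hker, ← hζs, Submodule.mem_orthogonal]
    intro y hy
    induction hy using Submodule.span_induction with
    | mem y hy => obtain ⟨i, rfl⟩ := hy; exact hζw i j
    | zero => simp
    | add a b _ _ ha hb => simp [inner_add_left, ha, hb]
    | smul c a _ ha => simp [real_inner_smul_left, ha]
  have hwli : LinearIndependent ℝ w := by
    rw [Fintype.linearIndependent_iff]
    intro g hg
    have h0 : d (∑ i, g i • w i) = 0 := by rw [hg, map_zero]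
    rw [map_sum] at h0
    simp only [map_smul, hdw] at h0
    exact Fintype.linearIndependent_iff.mp hβ.linearIndependent g h0
  have hfrk : finrank ℝ (LinearMap.ker T) = n := by
    rw [hker, ← hζs, finrank_span_eq_card hζ.linearIndependent, Fintype.card_fin]
  have hfr : finrank ℝ ↥((LinearMap.ker T)ᗮ) = m := by
    have h1 := Submodule.finrank_add_finrank_orthogonal (LinearMap.ker T)
    omega
  set w' : Fin m → ↥((LinearMap.ker T)ᗮ) := fun j => ⟨w j, hwK j⟩ with hw'
  have hwli' : LinearIndependent ℝ w' := by
    have hco : w = (Submodule.subtype ((LinearMap.ker T)ᗮ)) ∘ w' := rfl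
    exact LinearIndependent.of_comp _ (hco ▸ hwli)
  have hcard : Fintype.card (Fin m) = finrank ℝ ↥((LinearMap.ker T)ᗮ) := by simp [hfr]
  set wb : Basis (Fin m) ℝ ↥((LinearMap.ker T)ᗮ) :=
    Basis.mk hwli' (le_of_eq (hwli'.span_eq_top_of_card_eq_finrank' hcard).symm) with hwb
  have hwbj : ∀ j, wb j = w' j := fun j => by rw [hwb, Basis.mk_apply]
  have hTmem : ∀ x ∈ (LinearMap.ker T)ᗮ, T x ∈ (LinearMap.ker T)ᗮ := by
    intro x _
    rw [Submodule.mem_orthogonal]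
    intro y hy
    have hy0 : d y = 0 := by rw [hker] at hy; exact hy
    have h2 : (⟪y, T x⟫) = ⟪d y, d x⟫ := LinearMap.adjoint_inner_right d y (d x)
    rw [h2, hy0, inner_zero_left]
  set M := LinearMap.toMatrix wb wb (T.restrict hTmem) with hM
  have hexp : ∀ j, T (w j) = ∑ i, M i j • w i := by
    intro j
    have h1 : (T.restrict hTmem) (wb j) = ∑ i, M i j • wb i := by
      simp only [hM, LinearMap.toMatrix_apply]
      exact (Basis.sum_repr wb ((T.restrict hTmem) (wb j))).symm
    have h2 := congrArg (Subtype.val) h1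
    rw [LinearMap.restrict_coe_apply] at h2
    rw [hwbj j] at h2
    simp only [AddSubmonoidClass.coe_finset_sum, SetLike.val_smul, hwbj] at h2
    exact h2
  set G := gramMat w with hG
  have hGM : G * M = 1 := by
    ext k j
    rw [Matrix.mul_apply, Matrix.one_apply]
    have h3 : ∑ i, G k i * M i j = ⟪w k, T (w j)⟫ := by
      rw [hexp j, inner_sum]
      exact Finset.sum_congr rfl fun i _ => by
        simp only [real_inner_smul_right, hG, gramMat, Matrix.of_apply]; ring
    have h2 : (⟪w k, T (w j)⟫) = ⟪d (w k), d (w j)⟫ :=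
      LinearMap.adjoint_inner_right d (w k) (d (w j))
    rw [h3, h2, hdw, hdw, orthonormal_iff_ite.mp hβ k j]
  have hdet : G.det * M.det = 1 := by rw [← Matrix.det_mul, hGM, Matrix.det_one]
  have hGpos : 0 < G.det := (gramMat_posDef hwli).det_pos
  have hMnn : 0 ≤ M.det := by nlinarith [hdet, hGpos]
  have hvol : volBar d = Real.sqrt M.det := by
    unfold volBar detPrime
    rw [← hT, dif_pos hTmem, ← LinearMap.det_toMatrix wb, ← hM]
  have hwin : ∀ i j, (⟪w i, w j⟫ : ℝ) = ⟪u i, u j⟫ - ∑ k, ⟪ζ k, u i⟫ * ⟪ζ k, u j⟫ := by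
    intro i j
    have e1 : (⟪w i, w j⟫ : ℝ) = ⟪u i, w j⟫ := by
      rw [hwdef i, inner_sub_left, sum_inner]
      simp [real_inner_smul_left, hζw]
    have e2 : (⟪u i, w j⟫ : ℝ) = ⟪u i, u j⟫ - ∑ k, ⟪ζ k, u i⟫ * ⟪ζ k, u j⟫ := by
      rw [hwdef j, inner_sub_right, inner_sum]
      congr 1
      exact Finset.sum_congr rfl fun k _ => by
        rw [real_inner_smul_right, real_inner_comm (u i) (ζ k)]; ring
    rw [e1, e2]
  have hwn : wedgeNorm (fun j => Fin.append ζ u (Fin.cast h.symm j)) = Real.sqrt G.det := by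
    rw [wedgeNorm_eq_sqrt, gramMat_cast h, Matrix.det_submatrix_equiv_self,
      det_gramMat_append ζ u hζ]
    congr 2
    ext i j
    simp only [Matrix.sub_apply, Matrix.mul_apply, Matrix.transpose_apply, gramMat,
      Matrix.of_apply, hG]
    rw [hwin i j]
  rw [hvol, hwn, ← Real.sqrt_mul hMnn, mul_comm M.det G.det, hdet, Real.sqrt_one]


theorem det_Z_iso_isometric_and_det_C_iso_scales
    {Ce Co : Type*}
    [NormedAddCommGroup Ce] [InnerProductSpace ℝ Ce] [FiniteDimensional ℝ Ce]
    [NormedAddCommGroup Co] [InnerProductSpace ℝ Co] [FiniteDimensional ℝ Co]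
    (d0 : Ce →ₗ[ℝ] Co) (d1 : Co →ₗ[ℝ] Ce)
    (h10 : d1.comp d0 = 0) (h01 : d0.comp d1 = 0) :
    -- (a) `0 → B → Z → HC → 0` splits orthogonally and the induced isomorphism
    --     `det Z ≅ det B ⊗ det HC` is norm preserving (stated for the even parity; the odd
    --     parity is the same statement for the complex with the two parities exchanged)
    ((∀ (β : Fin (finrank ℝ (LinearMap.range d1)) → LinearMap.ker d0)
        (η : Fin (finrank ℝ (LinearMap.ker d0 ⊓ (LinearMap.range d1)ᗮ : Submodule ℝ Ce)) →
          LinearMap.ker d0),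
        Orthonormal ℝ β →
        Submodule.span ℝ (Set.range fun j => (β j : Ce)) = LinearMap.range d1 →
        Orthonormal ℝ η →
        Submodule.span ℝ (Set.range fun j => (η j : Ce)) =
          LinearMap.ker d0 ⊓ (LinearMap.range d1)ᗮ →
        ∀ h : finrank ℝ (LinearMap.range d1) +
            finrank ℝ (LinearMap.ker d0 ⊓ (LinearMap.range d1)ᗮ : Submodule ℝ Ce) =
            finrank ℝ (LinearMap.ker d0),
          wedgeNorm (fun j => Fin.append β η (Fin.cast h.symm j)) = 1) ∧
      (∀ (β : Fin (finrank ℝ (LinearMap.range d0)) → LinearMap.ker d1)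
        (η : Fin (finrank ℝ (LinearMap.ker d1 ⊓ (LinearMap.range d0)ᗮ : Submodule ℝ Co)) →
          LinearMap.ker d1),
        Orthonormal ℝ β →
        Submodule.span ℝ (Set.range fun j => (β j : Co)) = LinearMap.range d0 →
        Orthonormal ℝ η →
        Submodule.span ℝ (Set.range fun j => (η j : Co)) =
          LinearMap.ker d1 ⊓ (LinearMap.range d0)ᗮ →
        ∀ h : finrank ℝ (LinearMap.range d0) +
            finrank ℝ (LinearMap.ker d1 ⊓ (LinearMap.range d0)ᗮ : Submodule ℝ Co) =
            finrank ℝ (LinearMap.ker d1),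
          wedgeNorm (fun j => Fin.append β η (Fin.cast h.symm j)) = 1)) ∧
    -- (b) for the sequence `0 → Z → C →d→ B^op → 0`: in the even parity, with `ζ` an
    --     orthonormal basis of `Z^even = ker d0` and `u` lifts of an orthonormal basis of
    --     `(B^op)^even = im d0`, the generator `ζ ∧ u` of `det C^even` satisfies
    --     `Vol(d̄0) ‖ζ ∧ u‖ = 1`; similarly in the odd parity with `Vol(d̄1)`
    ((∀ (ζ : Fin (finrank ℝ (LinearMap.ker d0)) → Ce)
        (βo : Fin (finrank ℝ (LinearMap.range d0)) → Co)
        (u : Fin (finrank ℝ (LinearMap.range d0)) → Ce),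
        Orthonormal ℝ ζ → Submodule.span ℝ (Set.range ζ) = LinearMap.ker d0 →
        Orthonormal ℝ βo → Submodule.span ℝ (Set.range βo) = LinearMap.range d0 →
        (∀ j, d0 (u j) = βo j) →
        ∀ h : finrank ℝ (LinearMap.ker d0) + finrank ℝ (LinearMap.range d0) =
            finrank ℝ Ce,
          volBar d0 * wedgeNorm (fun j => Fin.append ζ u (Fin.cast h.symm j)) = 1) ∧
      (∀ (ζ : Fin (finrank ℝ (LinearMap.ker d1)) → Co)
        (βe : Fin (finrank ℝ (LinearMap.range d1)) → Ce)
        (u : Fin (finrank ℝ (LinearMap.range d1)) → Co),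
        Orthonormal ℝ ζ → Submodule.span ℝ (Set.range ζ) = LinearMap.ker d1 →
        Orthonormal ℝ βe → Submodule.span ℝ (Set.range βe) = LinearMap.range d1 →
        (∀ j, d1 (u j) = βe j) →
        ∀ h : finrank ℝ (LinearMap.ker d1) + finrank ℝ (LinearMap.range d1) =
            finrank ℝ Co,
          volBar d1 * wedgeNorm (fun j => Fin.append ζ u (Fin.cast h.symm j)) = 1)) := by
  refine ⟨⟨?_, ?_⟩, ?_, ?_⟩
  · intro β η hβ hβs hη hηs h
    refine wedgeNorm_append_orthonormal β η hβ hη (fun i j => ?_) h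
    have hb : (β i : Ce) ∈ LinearMap.range d1 := by
      rw [← hβs]; exact Submodule.subset_span ⟨i, rfl⟩
    have hh : (η j : Ce) ∈ (LinearMap.range d1)ᗮ := by
      have hm : (η j : Ce) ∈ LinearMap.ker d0 ⊓ (LinearMap.range d1)ᗮ := by
        rw [← hηs]; exact Submodule.subset_span ⟨j, rfl⟩
      exact hm.2
    have hco : (inner ℝ (β i) (η j) : ℝ) = inner ℝ ((β i : Ce)) ((η j : Ce)) := rfl
    rw [hco]
    exact ((Submodule.mem_orthogonal _ _).mp hh) _ hb
  · intro β η hβ hβs hη hηs h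
    refine wedgeNorm_append_orthonormal β η hβ hη (fun i j => ?_) h
    have hb : (β i : Co) ∈ LinearMap.range d0 := by
      rw [← hβs]; exact Submodule.subset_span ⟨i, rfl⟩
    have hh : (η j : Co) ∈ (LinearMap.range d0)ᗮ := by
      have hm : (η j : Co) ∈ LinearMap.ker d1 ⊓ (LinearMap.range d0)ᗮ := by
        rw [← hηs]; exact Submodule.subset_span ⟨j, rfl⟩
      exact hm.2
    have hco : (inner ℝ (β i) (η j) : ℝ) = inner ℝ ((β i : Co)) ((η j : Co)) := rfl
    rw [hco]
    exact ((Submodule.mem_orthogonal _ _).mp hh) _ hb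
  · intro ζ βo u hζ hζs hβ hβs hu h
    exact volBar_mul_wedgeNorm d0 ζ βo u hζ hζs hβ hu h
  · intro ζ βe u hζ hζs hβ hβs hu h
    exact volBar_mul_wedgeNorm d1 ζ βe u hζ hζs hβ hu h
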